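/- Let w be a Lyndon binary word of length n with strictly more 1's than 0's and unmatched positions p_1 < … < p_m (all carrying 1). For every 0 ≤ t ≤ m, the matched pairs of the word w_t are exactly the matched pairs of w together with the nested pairs {p_s, p_{m+1−s}} for 1 ≤ s ≤ min(t, m−t), and the unmatched positions of w_t are exactly the positions p_s with min(t, m−t) < s ≤ max(t, m−t). In particular, the pairs created in the successive passage from w to w_m are nested, each new pair being innermost among those created so far. -/

import Mathlib

/-!
Common definitions: binary words of length `n`, rotations, necklaces (the quotient
poset `Bₙ/Cₙ`), the cyclic matching procedure, Lyndon words, the map `φ`,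
crossing pairs, and the words `w_t`.

Throughout, a binary word of length `n` is a function `Fin n → Bool`, where `true`
encodes the letter `1` and `false` the letter `0`.
-/

/-- A binary word of length `n`: `true` encodes the letter `1`, `false` the letter `0`. -/
abbrev Word (n : ℕ) := Fin n → Bool

variable {n : ℕ} [NeZero n]

/-- The rotation `σ_i`, shifting the letters of `w` cyclically by `i` positions (so the
letter at position `j` of `w` appears at position `j + i` of `rot i w`). -/
def rot (i : Fin n) (w : Word n) : Word n := fun j => w (j - i)

lemma rot_rot (i j : Fin n) (w : Word n) : rot i (rot j w) = rot (j + i) w := by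
  funext k
  simp [rot, sub_sub, add_comm]

/-- Two words are equivalent when one is a cyclic rotation of the other. -/
def rotSetoid (n : ℕ) [NeZero n] : Setoid (Word n) where
  r w w' := ∃ i : Fin n, rot i w = w'
  iseqv := by
    refine ⟨fun w => ⟨0, ?_⟩, ?_, ?_⟩
    · funext j; simp [rot]
    · rintro w w' ⟨i, rfl⟩
      refine ⟨-i, ?_⟩
      rw [rot_rot]
      funext j; simp [rot]
    · rintro w w' w'' ⟨i, rfl⟩ ⟨j, rfl⟩
      exact ⟨i + j, (rot_rot j i w).symm⟩

/-- A necklace: an equivalence class of binary words under cyclic rotation. -/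
abbrev Necklace (n : ℕ) [NeZero n] := Quotient (rotSetoid n)

/-- The necklace of a word. -/
def nec (w : Word n) : Necklace n := Quotient.mk (rotSetoid n) w

/-- The number of `1`s in a word. -/
def wt (w : Word n) : ℕ := (Finset.univ.filter fun i => w i = true).card

/-- The number of `0`s in a word. -/
def zeros (w : Word n) : ℕ := (Finset.univ.filter fun i => w i = false).card

/-- The rank of a necklace: the number of `1`s in any representative. -/
noncomputable def rank (u : Necklace n) : ℕ := wt (Quotient.out u)

/-- The set of positions belonging to some pair of `M`. -/
def matchedPos (M : Finset (Fin n × Fin n)) : Finset (Fin n) :=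
  M.image Prod.fst ∪ M.image Prod.snd

/-- `j` is the first position outside `S` encountered strictly after `i` in the cyclic
order `i+1, i+2, …` (indices mod `n`). -/
def FirstAfter (S : Finset (Fin n)) (i j : Fin n) : Prop :=
  j ∉ S ∧ j ≠ i ∧ ∀ k : Fin n, k ∉ S → k ≠ i → (j - i).val ≤ (k - i).val

/-- One step of the cyclic matching procedure on the word `w`: choose an as-yet-unmatched
position `i` carrying the letter `0` such that the first as-yet-unmatched position `j`
after `i` in cyclic order carries the letter `1`, and declare `{i, j}` a matched pair
(recorded as the ordered pair `(i, j)`, the `0`-position first). -/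
inductive MatchStep (w : Word n) :
    Finset (Fin n × Fin n) → Finset (Fin n × Fin n) → Prop
  | step {M : Finset (Fin n × Fin n)} {i j : Fin n}
      (hi : i ∉ matchedPos M) (hw : w i = false)
      (hj : FirstAfter (matchedPos M) i j) (hj1 : w j = true) :
      MatchStep w M (insert (i, j) M)

/-- A maximal execution of the cyclic matching procedure on `w`, starting from the empty
matching: `M` is reachable from `∅` by matching steps and no further step is possible. -/
def IsMaximalMatching (w : Word n) (M : Finset (Fin n × Fin n)) : Prop :=
  Relation.ReflTransGen (MatchStep w) ∅ M ∧ ∀ M', ¬ MatchStep w M M'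

/-- The cyclic matching of `w`: the set of matched pairs produced by (any) maximal
execution of the cyclic matching procedure. -/
noncomputable def matching (w : Word n) : Finset (Fin n × Fin n) :=
  letI := Classical.dec (∃ M, IsMaximalMatching w M)
  if h : ∃ M, IsMaximalMatching w M then h.choose else ∅

/-- The unmatched positions of `w`: positions belonging to no matched pair. -/
noncomputable def unmatchedPos (w : Word n) : Finset (Fin n) :=
  Finset.univ \ matchedPos (matching w)

/-- Lexicographic comparison of words with respect to the letter order `1 ≺ 0`
(recall `true` encodes `1` and `false` encodes `0`). -/
def lexLE (w w' : Word n) : Prop :=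
  w = w' ∨ ∃ i : Fin n, (∀ j : Fin n, j < i → w j = w' j) ∧ w i = true ∧ w' i = false

/-- A word is Lyndon if it is lexicographically smallest among all of its rotations,
with respect to the letter order `1 ≺ 0`. -/
def IsLyndon (w : Word n) : Prop := ∀ i : Fin n, lexLE w (rot i w)

/-- The Lyndon rearrangement of `w`: its lexicographically smallest rotation. -/
noncomputable def lyndonOf (w : Word n) : Word n :=
  letI := Classical.dec (∃ i : Fin n, IsLyndon (rot i w))
  if h : ∃ i : Fin n, IsLyndon (rot i w) then rot h.choose w else w

/-- Change the letter at the rightmost unmatched position of `w` to `0`. -/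
noncomputable def flipTop (w : Word n) : Word n :=
  if h : (unmatchedPos w).Nonempty then
    Function.update w ((unmatchedPos w).max' h) false
  else w

/-- The map `φ`: take the Lyndon rearrangement of a representative and change the letter
at its rightmost unmatched position (which carries a `1` on the upper half of ranks)
to `0`. -/
noncomputable def phi (u : Necklace n) : Necklace n :=
  nec (flipTop (lyndonOf (Quotient.out u)))

/-- `x` lies strictly inside the cyclic arc running from `i` (exclusive) to `k`
(exclusive), in the cyclic order of positions. -/
def StrictBtw (i x k : Fin n) : Prop :=
  0 < (x - i).val ∧ (x - i).val < (k - i).val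

/-- The pairs `{i, k}` and `{j, l}` cross: exactly one of `j, l` lies strictly inside one
of the two cyclic arcs determined by `i` and `k`. -/
def Crosses (i k j l : Fin n) : Prop := Xor' (StrictBtw i j k) (StrictBtw i l k)

/-- `wT w t` is the word obtained from `w` by changing the letters at the last `t`
unmatched positions of `w` to `0`; that is, if the unmatched positions of `w` are
`p₁ < … < p_m`, the positions `p_{m-t+1}, …, p_m` are changed to `0`. -/
noncomputable def wT (w : Word n) (t : ℕ) : Word n := fun j =>
  if j ∈ unmatchedPos w ∧ ((unmatchedPos w).filter fun k => j ≤ k).card ≤ t then false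
  else w j

/-- The order on necklaces (the poset `Bₙ/Cₙ`): `u ≤ v` iff there are representatives
`w` of `u` and `w'` of `v` such that every position carrying `1` in `w` also carries `1`
in `w'`. -/
def nle (u v : Necklace n) : Prop :=
  ∃ w w' : Word n, nec w = u ∧ nec w' = v ∧ ∀ i, w i = true → w' i = true

/-- The strict order on necklaces. -/
def nlt (u v : Necklace n) : Prop := nle u v ∧ u ≠ v

/-- `v` covers `u` in `Bₙ/Cₙ`: `u < v` and there is no `z` with `u < z < v`. -/
def ncovBy (u v : Necklace n) : Prop := nlt u v ∧ ∀ z, nlt u z → ¬ nlt z v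

/-- A chain top: a necklace `v` in the upper half of ranks (`2·rank v ≥ n`) which is not
the image under `φ` of any necklace in the strict upper half of ranks. -/
def IsChainTop (v : Necklace n) : Prop :=
  n ≤ 2 * rank v ∧ ∀ u : Necklace n, n < 2 * rank u → phi u ≠ v

/-- The `φ`-string below the chain top `v`: the necklaces of the words `w_t`,
`0 ≤ t ≤ m`, where `w` is the Lyndon representative of `v` and `m = 2·rank v − n`. -/
noncomputable def chainOf (v : Necklace n) : Set (Necklace n) :=
  { u | ∃ t ≤ 2 * rank v - n, u = nec (wT (lyndonOf (Quotient.out v)) t) }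

section AuxMatching

open Finset Relation

variable {n : ℕ} [NeZero n]

lemma fin_sub_val (a b : Fin n) :
    ((a - b : Fin n) : ℕ) = if (b : ℕ) ≤ (a : ℕ) then (a : ℕ) - b else (a : ℕ) + n - b := by
  have ha := a.isLt; have hb := b.isLt
  rw [Fin.sub_def]
  rcases le_or_gt (b : ℕ) (a : ℕ) with h | h
  · rw [if_pos h]
    have hx : n - (b : ℕ) + a = n + ((a : ℕ) - b) := by omega
    simp only [hx, Nat.add_mod_left, Nat.mod_eq_of_lt (by omega : (a : ℕ) - b < n)]
  · rw [if_neg (by omega)]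
    simp only [Nat.mod_eq_of_lt (by omega : n - (b : ℕ) + a < n)]
    omega

lemma mem_matchedPos {M : Finset (Fin n × Fin n)} {x : Fin n} :
    x ∈ matchedPos M ↔ ∃ q ∈ M, q.1 = x ∨ q.2 = x := by
  simp only [matchedPos, mem_union, mem_image]
  constructor
  · rintro (⟨q, hq, rfl⟩ | ⟨q, hq, rfl⟩)
    · exact ⟨q, hq, Or.inl rfl⟩
    · exact ⟨q, hq, Or.inr rfl⟩
  · rintro ⟨q, hq, rfl | rfl⟩
    · exact Or.inl ⟨q, hq, rfl⟩
    · exact Or.inr ⟨q, hq, rfl⟩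

lemma matchedPos_insert (i j : Fin n) (M : Finset (Fin n × Fin n)) :
    matchedPos (insert (i, j) M) = insert i (insert j (matchedPos M)) := by
  ext x
  simp only [mem_matchedPos, mem_insert, Finset.mem_insert]
  constructor
  · rintro ⟨q, (rfl | hq), h⟩
    · rcases h with rfl | rfl
      · exact Or.inl rfl
      · exact Or.inr (Or.inl rfl)
    · exact Or.inr (Or.inr ⟨q, hq, h⟩)
  · rintro (rfl | rfl | ⟨q, hq, h⟩)
    · exact ⟨(x, j), Or.inl rfl, Or.inl rfl⟩
    · exact ⟨(i, x), Or.inl rfl, Or.inr rfl⟩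
    · exact ⟨q, Or.inr hq, h⟩

lemma matchedPos_union (M N : Finset (Fin n × Fin n)) :
    matchedPos (M ∪ N) = matchedPos M ∪ matchedPos N := by
  ext x
  simp only [mem_matchedPos, Finset.mem_union]
  constructor
  · rintro ⟨q, hq | hq, h⟩
    · exact Or.inl ⟨q, hq, h⟩
    · exact Or.inr ⟨q, hq, h⟩
  · rintro (⟨q, hq, h⟩ | ⟨q, hq, h⟩)
    · exact ⟨q, Or.inl hq, h⟩
    · exact ⟨q, Or.inr hq, h⟩

lemma matchedPos_mono {M N : Finset (Fin n × Fin n)} (h : M ⊆ N) :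
    matchedPos M ⊆ matchedPos N := by
  intro x hx
  rw [mem_matchedPos] at hx ⊢
  obtain ⟨q, hq, h'⟩ := hx
  exact ⟨q, h hq, h'⟩

lemma MatchStep.subset {w : Word n} {M N : Finset (Fin n × Fin n)} (h : MatchStep w M N) :
    M ⊆ N := by
  cases h with
  | step hi hw hj hj1 => exact Finset.subset_insert _ _

lemma rtg_subset {w : Word n} {M N : Finset (Fin n × Fin n)}
    (h : Relation.ReflTransGen (MatchStep w) M N) : M ⊆ N := by
  induction h with
  | refl => exact Finset.Subset.refl _
  | tail _ hstep ih => exact ih.trans hstep.subset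

lemma firstAfter_unique {S : Finset (Fin n)} {i j j' : Fin n}
    (h : FirstAfter S i j) (h' : FirstAfter S i j') : j = j' := by
  have h1 := h.2.2 j' h'.1 h'.2.1
  have h2 := h'.2.2 j h.1 h.2.1
  have hv : (j - i : Fin n) = (j' - i : Fin n) := Fin.val_injective (le_antisymm h1 h2)
  exact sub_left_inj.mp hv

lemma diamond {w : Word n} {M M1 M2 : Finset (Fin n × Fin n)}
    (h1 : MatchStep w M M1) (h2 : MatchStep w M M2) :
    M1 = M2 ∨ ∃ M3, MatchStep w M1 M3 ∧ MatchStep w M2 M3 := by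
  obtain ⟨hi1, hw1, hj1, hj11⟩ := h1
  rename_i i1 j1
  obtain ⟨hi2, hw2, hj2, hj21⟩ := h2
  rename_i i2 j2
  by_cases hii : i1 = i2
  · subst hii
    have : j1 = j2 := firstAfter_unique hj1 hj2
    subst this
    exact Or.inl rfl
  · right
    have hij12 : j1 ≠ i2 := by
      intro h; rw [h, hw2] at hj11; exact Bool.false_ne_true hj11
    have hij21 : j2 ≠ i1 := by
      intro h; rw [h, hw1] at hj21; exact Bool.false_ne_true hj21
    have hjj : j1 ≠ j2 := by
      intro h
      subst h
      have a1 : ((j1 - i1 : Fin n) : ℕ) ≤ ((i2 - i1 : Fin n) : ℕ) :=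
        hj1.2.2 i2 hi2 (Ne.symm hii)
      have a2 : ((j1 - i2 : Fin n) : ℕ) ≤ ((i1 - i2 : Fin n) : ℕ) :=
        hj2.2.2 i1 hi1 hii
      have e1 : (i1 : ℕ) ≠ (i2 : ℕ) := fun h => hii (Fin.val_injective h)
      have e2 : (j1 : ℕ) ≠ (i2 : ℕ) := fun h => hij12 (Fin.val_injective h)
      have e3 : (j1 : ℕ) ≠ (i1 : ℕ) := fun h => hj1.2.1 (Fin.val_injective h)
      have l1 := j1.isLt; have l2 := i1.isLt; have l3 := i2.isLt
      rw [fin_sub_val, fin_sub_val] at a1 a2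
      split_ifs at a1 a2 <;> omega
    refine ⟨insert (i2, j2) (insert (i1, j1) M), ?_, ?_⟩
    · exact MatchStep.step
        (by
          rw [matchedPos_insert]
          simp only [Finset.mem_insert]
          push_neg
          exact ⟨Ne.symm hii, Ne.symm hij12, hi2⟩)
        hw2
        ⟨by
          rw [matchedPos_insert]
          simp only [Finset.mem_insert]
          push_neg
          exact ⟨hij21, Ne.symm hjj, hj2.1⟩,
         hj2.2.1,
         fun k hk hki => hj2.2.2 k (fun hk' =>
           hk (matchedPos_mono (Finset.subset_insert _ _) hk')) hki⟩
        hj21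
    · have hcomm : insert (i2, j2) (insert (i1, j1) M) = insert (i1, j1) (insert (i2, j2) M) :=
        Finset.insert_comm _ _ _
      rw [hcomm]
      exact MatchStep.step
        (by
          rw [matchedPos_insert]
          simp only [Finset.mem_insert]
          push_neg
          exact ⟨hii, Ne.symm hij21, hi1⟩)
        hw1
        ⟨by
          rw [matchedPos_insert]
          simp only [Finset.mem_insert]
          push_neg
          exact ⟨hij12, hjj, hj1.1⟩,
         hj1.2.1,
         fun k hk hki => hj1.2.2 k (fun hk' =>
           hk (matchedPos_mono (Finset.subset_insert _ _) hk')) hki⟩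
        hj11

end AuxMatching
section AuxMatching2

set_option linter.unusedSectionVars false

open Finset Relation

variable {n : ℕ} [NeZero n]

lemma stuck_rtg {w : Word n} {M N : Finset (Fin n × Fin n)}
    (hmax : ∀ M', ¬ MatchStep w M M') (h : Relation.ReflTransGen (MatchStep w) M N) :
    M = N := by
  rcases (Relation.ReflTransGen.cases_head h) with rfl | ⟨c, hc, _⟩
  · rfl
  · exact absurd hc (hmax c)

lemma maximal_unique {w : Word n} {M1 M2 : Finset (Fin n × Fin n)}
    (h1 : IsMaximalMatching w M1) (h2 : IsMaximalMatching w M2) : M1 = M2 := by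
  obtain ⟨d, hd1, hd2⟩ := Relation.church_rosser
    (fun a b c hab hac => by
      rcases diamond hab hac with rfl | ⟨M3, s1, s2⟩
      · exact ⟨b, Relation.ReflGen.refl, Relation.ReflTransGen.refl⟩
      · exact ⟨M3, Relation.ReflGen.single s1, Relation.ReflTransGen.single s2⟩)
    h1.1 h2.1
  rw [stuck_rtg h1.2 hd1, stuck_rtg h2.2 hd2]

lemma exists_maximal (w : Word n) :
    ∀ k (M : Finset (Fin n × Fin n)), (Finset.univ \ matchedPos M).card ≤ k →
      ∃ M', Relation.ReflTransGen (MatchStep w) M M' ∧ ∀ M'', ¬ MatchStep w M' M'' := by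
  intro k
  induction k with
  | zero =>
    intro M hM
    refine ⟨M, Relation.ReflTransGen.refl, ?_⟩
    intro M'' hstep
    obtain ⟨hi, hw0, hj0, hj10⟩ := hstep
    rename_i i j
    have : i ∈ Finset.univ \ matchedPos M := by
      simp [Finset.mem_sdiff, hi]
    rw [Finset.card_eq_zero.mp (Nat.le_zero.mp hM)] at this
    exact absurd this (Finset.notMem_empty i)
  | succ k ih =>
    intro M hM
    by_cases hs : ∃ M', MatchStep w M M'
    · obtain ⟨M', h'⟩ := hs
      have hcard : (Finset.univ \ matchedPos M').card ≤ k := by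
        obtain ⟨hi, hw0, hj, hj10⟩ := h'
        rename_i i j
        rw [matchedPos_insert]
        have hsub : Finset.univ \ insert i (insert j (matchedPos M)) ⊆
            (Finset.univ \ matchedPos M).erase i := by
          intro x hx
          simp only [Finset.mem_sdiff, Finset.mem_insert, Finset.mem_erase,
            Finset.mem_univ, true_and] at hx ⊢
          tauto
        calc (Finset.univ \ insert i (insert j (matchedPos M))).card
            ≤ ((Finset.univ \ matchedPos M).erase i).card := Finset.card_le_card hsub
          _ = (Finset.univ \ matchedPos M).card - 1 := by
              rw [Finset.card_erase_of_mem (by simp [Finset.mem_sdiff, hi])]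
          _ ≤ k := by omega
      obtain ⟨M'', hr, hmax⟩ := ih M' hcard
      exact ⟨M'', Relation.ReflTransGen.head h' hr, hmax⟩
    · push_neg at hs
      exact ⟨M, Relation.ReflTransGen.refl, hs⟩

lemma matching_isMax (w : Word n) : IsMaximalMatching w (matching w) := by
  have hex : ∃ M, IsMaximalMatching w M := by
    obtain ⟨M, h1, h2⟩ := exists_maximal w (Finset.univ \ matchedPos ∅).card ∅ le_rfl
    exact ⟨M, h1, h2⟩
  unfold matching
  split
  · next h => exact h.choose_spec
  · next h => exact absurd hex h

lemma matching_eq {w : Word n} {M : Finset (Fin n × Fin n)}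
    (h : IsMaximalMatching w M) : matching w = M :=
  maximal_unique (matching_isMax w) h

lemma rtg_congr {w w' : Word n} {M N : Finset (Fin n × Fin n)}
    (h : Relation.ReflTransGen (MatchStep w) M N)
    (hagree : ∀ x ∈ matchedPos N, w' x = w x) :
    Relation.ReflTransGen (MatchStep w') M N := by
  induction h with
  | refl => exact Relation.ReflTransGen.refl
  | @tail b c hb hstep ih =>
    obtain ⟨hi, hw, hj, hj1⟩ := hstep
    rename_i i j
    have hsub : matchedPos b ⊆ matchedPos (insert (i, j) b) :=
      matchedPos_mono (Finset.subset_insert _ _)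
    have hi' : i ∈ matchedPos (insert (i, j) b) := by
      rw [matchedPos_insert]; simp
    have hj' : j ∈ matchedPos (insert (i, j) b) := by
      rw [matchedPos_insert]; simp
    refine Relation.ReflTransGen.tail (ih fun x hx => hagree x (hsub hx)) ?_
    exact MatchStep.step hi ((hagree i hi').trans hw) hj ((hagree j hj').trans hj1)

lemma count_invariant {w : Word n} {M : Finset (Fin n × Fin n)}
    (h : Relation.ReflTransGen (MatchStep w) ∅ M) :
    (Finset.univ.filter fun i => w i = true ∧ i ∉ matchedPos M).card + M.card = wt w ∧
    (Finset.univ.filter fun i => w i = false ∧ i ∉ matchedPos M).card + M.card = zeros w := by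
  induction h with
  | refl =>
    constructor
    · simp [matchedPos, wt]
    · simp [matchedPos, zeros]
  | @tail b c hb hstep ih =>
    obtain ⟨hi, hw, hj, hj1⟩ := hstep
    rename_i i j
    have hnew : (i, j) ∉ b := by
      intro hmem
      exact hi (mem_matchedPos.mpr ⟨(i, j), hmem, Or.inl rfl⟩)
    have hcard : (insert (i, j) b).card = b.card + 1 := Finset.card_insert_of_notMem hnew
    have hij : i ≠ j := by
      intro h; rw [h, hj1] at hw; exact Bool.false_ne_true hw.symm
    have htrue : (Finset.univ.filter fun x => w x = true ∧ x ∉ matchedPos (insert (i, j) b)) =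
        (Finset.univ.filter fun x => w x = true ∧ x ∉ matchedPos b).erase j := by
      ext x
      simp only [Finset.mem_filter, Finset.mem_erase, Finset.mem_univ, true_and,
        matchedPos_insert, Finset.mem_insert]
      constructor
      · rintro ⟨hx, hx2⟩
        push_neg at hx2
        exact ⟨hx2.2.1, hx, hx2.2.2⟩
      · rintro ⟨hxj, hx, hx2⟩
        refine ⟨hx, ?_⟩
        push_neg
        refine ⟨?_, hxj, hx2⟩
        intro hxi
        rw [hxi, hw] at hx
        exact Bool.false_ne_true hx
    have hfalse : (Finset.univ.filter fun x => w x = false ∧ x ∉ matchedPos (insert (i, j) b)) =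
        (Finset.univ.filter fun x => w x = false ∧ x ∉ matchedPos b).erase i := by
      ext x
      simp only [Finset.mem_filter, Finset.mem_erase, Finset.mem_univ, true_and,
        matchedPos_insert, Finset.mem_insert]
      constructor
      · rintro ⟨hx, hx2⟩
        push_neg at hx2
        exact ⟨hx2.1, hx, hx2.2.2⟩
      · rintro ⟨hxi, hx, hx2⟩
        refine ⟨hx, ?_⟩
        push_neg
        refine ⟨hxi, ?_, hx2⟩
        intro hxj
        rw [hxj, hj1] at hx
        exact Bool.false_ne_true hx.symm
    have hjmem : j ∈ Finset.univ.filter fun x => w x = true ∧ x ∉ matchedPos b := by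
      simp only [Finset.mem_filter, Finset.mem_univ, true_and]
      exact ⟨hj1, hj.1⟩
    have himem : i ∈ Finset.univ.filter fun x => w x = false ∧ x ∉ matchedPos b := by
      simp only [Finset.mem_filter, Finset.mem_univ, true_and]
      exact ⟨hw, hi⟩
    constructor
    · rw [htrue, Finset.card_erase_of_mem hjmem, hcard]
      have := ih.1
      have hpos : 0 < (Finset.univ.filter fun x => w x = true ∧ x ∉ matchedPos b).card :=
        Finset.card_pos.mpr ⟨j, hjmem⟩
      omega
    · rw [hfalse, Finset.card_erase_of_mem himem, hcard]
      have := ih.2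
      have hpos : 0 < (Finset.univ.filter fun x => w x = false ∧ x ∉ matchedPos b).card :=
        Finset.card_pos.mpr ⟨i, himem⟩
      omega

end AuxMatching2
section AuxMatching3

set_option linter.unusedSectionVars false

open Finset Relation

variable {n : ℕ} [NeZero n]

lemma exists_step_aux {w : Word n} {M : Finset (Fin n × Fin n)}
    (hie : ∃ i, i ∉ matchedPos M ∧ w i = false)
    (hje : ∃ j, j ∉ matchedPos M ∧ w j = true) :
    ∃ M', MatchStep w M M' := by
  classical
  obtain ⟨i₀, hi₀, hwi₀⟩ := hie
  obtain ⟨j₀, hj₀, hwj₀⟩ := hje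
  set P : Finset (Fin n × Fin n) := Finset.univ.filter fun q =>
    q.1 ∉ matchedPos M ∧ w q.1 = false ∧ q.2 ∉ matchedPos M ∧ w q.2 = true with hP
  have hPne : P.Nonempty := ⟨(i₀, j₀), by simp [hP, hi₀, hwi₀, hj₀, hwj₀]⟩
  obtain ⟨q, hq, hqmin⟩ := P.exists_min_image (fun q => ((q.2 - q.1 : Fin n) : ℕ)) hPne
  obtain ⟨i, j⟩ := q
  simp only [hP, Finset.mem_filter, Finset.mem_univ, true_and] at hq
  obtain ⟨hi, hwi, hj, hwj⟩ := hq
  have hji : j ≠ i := by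
    intro h; rw [h, hwi] at hwj; exact Bool.false_ne_true hwj
  refine ⟨_, MatchStep.step hi hwi ⟨hj, hji, ?_⟩ hwj⟩
  intro k hk hki
  by_contra hlt
  push_neg at hlt
  have hkj : k ≠ j := by
    rintro rfl; exact absurd rfl (ne_of_lt hlt)
  cases hwk : w k with
  | true =>
    have hmem : (i, k) ∈ P := by simp [hP, hi, hwi, hk, hwk]
    have := hqmin (i, k) hmem
    simp only at this
    omega
  | false =>
    have hmem : (k, j) ∈ P := by simp [hP, hk, hwk, hj, hwj]
    have hle := hqmin (k, j) hmem
    simp only at hle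
    have e1 : (k : ℕ) ≠ (i : ℕ) := fun h => hki (Fin.val_injective h)
    have e2 : (k : ℕ) ≠ (j : ℕ) := fun h => hkj (Fin.val_injective h)
    have e3 : (j : ℕ) ≠ (i : ℕ) := fun h => hji (Fin.val_injective h)
    have l1 := i.isLt; have l2 := j.isLt; have l3 := k.isLt
    rw [fin_sub_val] at hlt hle
    rw [fin_sub_val] at hlt hle
    split_ifs at hlt hle <;> omega

lemma unmatched_true {w : Word n} (hmaj : zeros w < wt w) {i : Fin n}
    (hi : i ∈ unmatchedPos w) : w i = true := by
  by_contra h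
  have hw : w i = false := by
    cases hwi : w i
    · rfl
    · exact absurd hwi h
  have hmax := matching_isMax w
  obtain ⟨c1, c2⟩ := count_invariant hmax.1
  have hi' : i ∉ matchedPos (matching w) := by
    simpa [unmatchedPos, Finset.mem_sdiff] using hi
  have himem : i ∈ Finset.univ.filter
      fun x => w x = false ∧ x ∉ matchedPos (matching w) := by
    simp only [Finset.mem_filter, Finset.mem_univ, true_and]
    exact ⟨hw, hi'⟩
  have hfpos : 0 < (Finset.univ.filter
      fun x => w x = false ∧ x ∉ matchedPos (matching w)).card :=
    Finset.card_pos.mpr ⟨i, himem⟩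
  have htpos : 0 < (Finset.univ.filter
      fun x => w x = true ∧ x ∉ matchedPos (matching w)).card := by omega
  obtain ⟨j, hjmem⟩ := Finset.card_pos.mp htpos
  simp only [Finset.mem_filter, Finset.mem_univ, true_and] at hjmem
  obtain ⟨M', hstep⟩ := exists_step_aux ⟨i, hi', hw⟩ ⟨j, hjmem.2, hjmem.1⟩
  exact hmax.2 M' hstep

lemma card_filter_ge (m : ℕ) (r : Fin m) :
    (Finset.univ.filter fun s : Fin m => (r : ℕ) ≤ (s : ℕ)).card = m - r := by
  have : (Finset.univ.filter fun s : Fin m => (r : ℕ) ≤ (s : ℕ)) = Finset.Ici r := by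
    ext s
    simp only [Finset.mem_filter, Finset.mem_univ, true_and, Finset.mem_Ici, Fin.le_def]
  rw [this, Fin.card_Ici]

end AuxMatching3
/-- Let `w` be a Lyndon word with strictly more `1`s than `0`s and
unmatched positions `p 0 < … < p (m-1)` (0-indexed; all carrying `1`).  For every
`0 ≤ t ≤ m`, the matched pairs of `w_t` are exactly those of `w` together with the
nested pairs `{p s, p (m-1-s)}` for `s < min t (m−t)` (the `0` at `p (m-1-s)`, the `1` at
`p s`), and the unmatched positions of `w_t` are exactly the `p s` with
`min t (m−t) ≤ s < max t (m−t)`.  In particular the successively created pairs are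
nested, each new pair innermost among those created so far. -/
theorem matching_of_wT (n : ℕ) [NeZero n] (w : Word n)
    (hL : IsLyndon w) (hmaj : zeros w < wt w)
    (m : ℕ) (hm : (unmatchedPos w).card = m)
    (p : Fin m → Fin n) (hmono : StrictMono p)
    (hrange : ∀ j : Fin n, j ∈ unmatchedPos w ↔ ∃ s : Fin m, p s = j)
    (t : ℕ) (ht : t ≤ m) :
    matching (wT w t) =
      matching w ∪
        (Finset.univ.filter fun s : Fin m => (s : ℕ) < min t (m - t)).image
          (fun s => (p s.rev, p s)) ∧
    unmatchedPos (wT w t) =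
      (Finset.univ.filter fun s : Fin m =>
        min t (m - t) ≤ (s : ℕ) ∧ (s : ℕ) < max t (m - t)).image p := by
  classical
  have hWo : ∀ j : Fin n, j ∉ unmatchedPos w → wT w t j = w j := by
    intro j hj
    simp [wT, hj]
  have hpmem : ∀ s : Fin m, p s ∈ unmatchedPos w := fun s => (hrange (p s)).mpr ⟨s, rfl⟩
  have himg : unmatchedPos w = Finset.univ.image p := by
    ext j
    simp only [Finset.mem_image, Finset.mem_univ, true_and]
    rw [hrange j]
  have hinj := hmono.injective
  have hfc : ∀ r : Fin m, ((unmatchedPos w).filter fun k => p r ≤ k).card = m - r := by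
    intro r
    rw [himg]
    have h1 : (Finset.univ.image p).filter (fun k => p r ≤ k)
        = (Finset.univ.filter fun s : Fin m => p r ≤ p s).image p :=
      Finset.filter_image
    rw [h1, Finset.card_image_of_injective _ hinj]
    have h2 : (Finset.univ.filter fun s : Fin m => p r ≤ p s)
        = Finset.univ.filter fun s : Fin m => (r : ℕ) ≤ (s : ℕ) := by
      ext s
      simp only [Finset.mem_filter, Finset.mem_univ, true_and, hmono.le_iff_le, Fin.le_def]
    rw [h2, card_filter_ge]
  have hWp : ∀ r : Fin m, wT w t (p r) = if m - t ≤ (r : ℕ) then false else true := by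
    intro r
    have hup := hpmem r
    have hwp : w (p r) = true := unmatched_true hmaj hup
    have hr := r.isLt
    by_cases hc : ((unmatchedPos w).filter fun k => p r ≤ k).card ≤ t
    · rw [wT, if_pos ⟨hup, hc⟩, if_pos (by rw [hfc r] at hc; omega)]
    · rw [wT, if_neg (fun hh => hc hh.2), hwp, if_neg (by rw [hfc r] at hc; omega)]
  set K := min t (m - t) with hK
  have hKle : K + K ≤ m := by omega
  set F : Fin m → Fin n × Fin n := fun q => (p q.rev, p q) with hF
  set Ms : ℕ → Finset (Fin n × Fin n) := fun s =>
    matching w ∪ (Finset.univ.filter fun q : Fin m => (q : ℕ) < s).image F with hMs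
  have hmw : ∀ x : Fin n, x ∉ matchedPos (matching w) ↔ ∃ r : Fin m, p r = x := by
    intro x
    rw [← hrange x]
    simp [unmatchedPos]
  have hCs : ∀ s : ℕ, ∀ x : Fin n,
      x ∉ matchedPos (Ms s) ↔ ∃ r : Fin m, s ≤ (r : ℕ) ∧ (r : ℕ) + s < m ∧ p r = x := by
    intro s x
    constructor
    · intro hx
      have h1 : x ∉ matchedPos (matching w) := fun h =>
        hx ((matchedPos_mono Finset.subset_union_left) h)
      have h2 : ∀ q : Fin m, (q : ℕ) < s → p q.rev ≠ x ∧ p q ≠ x := by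
        intro q hq
        constructor <;> intro hqx <;> apply hx <;>
          apply matchedPos_mono Finset.subset_union_right
        · exact mem_matchedPos.mpr ⟨F q,
            Finset.mem_image_of_mem F (by simp [hq]), Or.inl hqx⟩
        · exact mem_matchedPos.mpr ⟨F q,
            Finset.mem_image_of_mem F (by simp [hq]), Or.inr hqx⟩
      obtain ⟨r, hr⟩ := (hmw x).mp h1
      have hrlt := r.isLt
      refine ⟨r, ?_, ?_, hr⟩
      · by_contra hc
        push_neg at hc
        exact (h2 r hc).2 hr
      · by_contra hc
        push_neg at hc
        have hrev : ((r.rev : Fin m) : ℕ) < s := by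
          rw [Fin.val_rev]
          omega
        exact (h2 r.rev hrev).1 (by rw [Fin.rev_rev]; exact hr)
    · rintro ⟨r, hs, hm2, rfl⟩
      intro hx
      rw [show Ms s = matching w ∪ (Finset.univ.filter fun q : Fin m => (q : ℕ) < s).image F
        from rfl, matchedPos_union] at hx
      rcases Finset.mem_union.mp hx with hx | hx
      · exact ((hmw (p r)).mpr ⟨r, rfl⟩) hx
      · rw [mem_matchedPos] at hx
        obtain ⟨q', hq', h'⟩ := hx
        obtain ⟨q, hq, rfl⟩ := Finset.mem_image.mp hq'
        simp only [Finset.mem_filter, Finset.mem_univ, true_and] at hq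
        have hqlt := q.isLt
        have hrlt := r.isLt
        rcases h' with h' | h'
        · have hv : ((q.rev : Fin m) : ℕ) = (r : ℕ) := congrArg Fin.val (hinj h')
          rw [Fin.val_rev] at hv
          omega
        · have hv : (q : ℕ) = (r : ℕ) := congrArg Fin.val (hinj h')
          omega
  have hMs0 : Ms 0 = matching w := by
    rw [show Ms 0 = matching w ∪ (Finset.univ.filter fun q : Fin m => (q : ℕ) < 0).image F
      from rfl]
    simp
  have hreach0 : Relation.ReflTransGen (MatchStep (wT w t)) ∅ (matching w) := by
    apply rtg_congr (matching_isMax w).1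
    intro x hx
    apply hWo
    simp [unmatchedPos, hx]
  have hstep : ∀ s : ℕ, s < K → MatchStep (wT w t) (Ms s) (Ms (s + 1)) := by
    intro s hs
    have hsm : s < m := by omega
    have h2s : s + s + 2 ≤ m := by omega
    set rs : Fin m := ⟨s, hsm⟩ with hrs
    have hrsv : (rs : ℕ) = s := rfl
    have hrevval : ((rs.rev : Fin m) : ℕ) = m - 1 - s := by
      rw [Fin.val_rev, hrsv]
      omega
    have hins : Ms (s + 1) = insert (F rs) (Ms s) := by
      rw [show Ms (s + 1) = matching w ∪
          (Finset.univ.filter fun q : Fin m => (q : ℕ) < s + 1).image F from rfl,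
        show Ms s = matching w ∪
          (Finset.univ.filter fun q : Fin m => (q : ℕ) < s).image F from rfl]
      have hfil : (Finset.univ.filter fun q : Fin m => (q : ℕ) < s + 1)
          = insert rs (Finset.univ.filter fun q : Fin m => (q : ℕ) < s) := by
        ext q
        simp only [Finset.mem_filter, Finset.mem_insert, Finset.mem_univ, true_and]
        constructor
        · intro h
          rcases Nat.lt_succ_iff_lt_or_eq.mp h with h | h
          · exact Or.inr h
          · exact Or.inl (Fin.ext (by rw [h, hrsv]))
        · rintro (rfl | h)
          · omega
          · omega
      rw [hfil, Finset.image_insert, Finset.union_insert]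
    rw [hins]
    have hiu : p rs.rev ∉ matchedPos (Ms s) :=
      (hCs s _).mpr ⟨rs.rev, by omega, by omega, rfl⟩
    have hju : p rs ∉ matchedPos (Ms s) :=
      (hCs s _).mpr ⟨rs, by omega, by omega, rfl⟩
    have hwi : wT w t (p rs.rev) = false := by
      rw [hWp, if_pos (by omega)]
    have hwj : wT w t (p rs) = true := by
      rw [hWp, if_neg (by omega)]
    have hne : p rs ≠ p rs.rev := fun h => by
      have := congrArg Fin.val (hinj h)
      omega
    refine MatchStep.step hiu hwi ⟨hju, hne, ?_⟩ hwj
    intro k hk hki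
    obtain ⟨r, hrs', hrm, rfl⟩ := (hCs s k).mp hk
    have hrne : (r : ℕ) ≠ ((rs.rev : Fin m) : ℕ) := fun h => hki (congrArg p (Fin.ext h))
    have hrlt' := r.isLt
    have hv1 : ((p rs) : ℕ) < ((p rs.rev) : ℕ) := hmono (by rw [Fin.lt_def]; omega)
    have hv2 : ((p rs) : ℕ) ≤ ((p r) : ℕ) := (hmono.le_iff_le).mpr (by rw [Fin.le_def]; omega)
    have hv3 : ((p r) : ℕ) < ((p rs.rev) : ℕ) := hmono (by rw [Fin.lt_def]; omega)
    have hlt := (p rs.rev).isLt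
    rw [fin_sub_val, fin_sub_val]
    split_ifs <;> omega
  have hmaxK : ∀ M', ¬ MatchStep (wT w t) (Ms K) M' := by
    intro M' hst
    obtain ⟨hi, hwi, hj, hwj⟩ := hst
    rename_i i j
    obtain ⟨r, hr1, hr2, rfl⟩ := (hCs K i).mp hi
    obtain ⟨r', hr1', hr2', rfl⟩ := (hCs K j).mp hj.1
    rw [hWp] at hwi hwj
    have c1 : m - t ≤ (r : ℕ) := by
      by_contra hc
      rw [if_neg hc] at hwi
      exact Bool.false_ne_true hwi.symm
    have c2 : (r' : ℕ) < m - t := by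
      by_contra hc
      push_neg at hc
      rw [if_pos hc] at hwj
      exact Bool.false_ne_true hwj
    omega
  have hreachK : Relation.ReflTransGen (MatchStep (wT w t)) ∅ (Ms K) := by
    have hall : ∀ s, s ≤ K → Relation.ReflTransGen (MatchStep (wT w t)) ∅ (Ms s) := by
      intro s
      induction s with
      | zero => intro _; rw [hMs0]; exact hreach0
      | succ s ih => intro h; exact (ih (by omega)).tail (hstep s (by omega))
    exact hall K le_rfl
  have hMK : matching (wT w t) = Ms K := matching_eq ⟨hreachK, hmaxK⟩
  constructor
  · rw [hMK]
  · ext x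
    simp only [unmatchedPos, Finset.mem_sdiff, Finset.mem_univ, true_and, hMK,
      Finset.mem_image, Finset.mem_filter]
    rw [hCs K x]
    constructor
    · rintro ⟨r, h1, h2, rfl⟩
      exact ⟨r, ⟨h1, by omega⟩, rfl⟩
    · rintro ⟨r, ⟨h1, h2⟩, rfl⟩
      exact ⟨r, h1, by omega⟩
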